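/- Let m > 0, C3 ≥ 0 and 0 ≤ C4 < 1 be real numbers, and define M(t) = m/(t+1) and κ(t) = C4·(1 + 2·M(t)) for natural numbers t ≥ 1. If a : ℕ → ℝ is a nonnegative sequence satisfying a(t+1) ≤ κ(t)·a(t) + C3 + C4·(M(t)² + 2·M(t)) for all t ≥ 1, then limsup_{t→∞} a(t) ≤ C3/(1 − C4). -/

import Mathlib

open Filter

/-- The optimizer drift bound `M(t) = m/(t+1)`. -/
noncomputable def Mdrift (m : ℝ) (t : ℕ) : ℝ := m / ((t : ℝ) + 1)

/-- The per-step contraction factor `κ(t) = C4·(1 + 2·M(t))`. -/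
noncomputable def kap (m C4 : ℝ) (t : ℕ) : ℝ := C4 * (1 + 2 * Mdrift m t)

lemma Mdrift_tendsto (m : ℝ) : Tendsto (Mdrift m) atTop (nhds 0) := by
  have h : Tendsto (fun t : ℕ => (t : ℝ) + 1) atTop atTop :=
    tendsto_atTop_add_const_right _ 1 tendsto_natCast_atTop_atTop
  exact Tendsto.div_atTop (tendsto_const_nhds (x := m)) h

theorem limsup_convergence_bound
    (m C3 C4 : ℝ) (hm : 0 < m) (hC3 : 0 ≤ C3) (hC4 : 0 ≤ C4) (hC4' : C4 < 1)
    (a : ℕ → ℝ) (ha : ∀ t, 0 ≤ a t)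
    (hrec : ∀ t, 1 ≤ t →
      a (t + 1) ≤ kap m C4 t * a t + C3 + C4 * ((Mdrift m t) ^ 2 + 2 * Mdrift m t)) :
    Filter.limsup a Filter.atTop ≤ C3 / (1 - C4) := by
  set K := C3 / (1 - C4) with hK
  clear_value K
  have hd : (0:ℝ) < 1 - C4 := by linarith
  have hKnn : 0 ≤ K := by rw [hK]; exact div_nonneg hC3 hd.le
  -- reduce to: ∀ ε > 0, eventually a t ≤ K + ε
  have key : ∀ ε : ℝ, 0 < ε → ∀ᶠ t in atTop, a t ≤ K + ε := by
    intro ε hε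
    set d := 1 - C4 with hdd
    clear_value d
    -- choose q
    set q : ℝ := 1 - d * (C3 + ε * d / 4) / (C3 + ε * d / 2) with hq
    have hden : 0 < C3 + ε * d / 2 := by nlinarith [mul_pos hε hd]
    have hnum : 0 < C3 + ε * d / 4 := by nlinarith [mul_pos hε hd]
    have hfrac : 0 < d * (C3 + ε * d / 4) / (C3 + ε * d / 2) :=
      div_pos (mul_pos hd hnum) hden
    clear_value q
    have hfrac' : d * (C3 + ε * d / 4) / (C3 + ε * d / 2) < d := by
      rw [div_lt_iff₀ hden]
      nlinarith [mul_pos (mul_pos hε hd) hd]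
    have hq1 : q < 1 := by rw [hq]; linarith
    have hqC4 : C4 < q := by rw [hq]; linarith
    have hq0 : 0 ≤ q := le_of_lt (lt_of_le_of_lt hC4 hqC4)
    have h1q : 0 < 1 - q := by linarith
    have h1qeq : 1 - q = d * (C3 + ε * d / 4) / (C3 + ε * d / 2) := by
      rw [hq]; ring
    have hKd : K * d = C3 := by rw [hK, div_mul_cancel₀ _ hd.ne']
    -- fixed point bound: C3/(1-q) ≤ K + ε/2
    have hfp : C3 / (1 - q) ≤ K + ε / 2 := by
      rw [div_le_iff₀ h1q, h1qeq, ← mul_div_assoc, le_div_iff₀ hden]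
      have h6 := congrArg (· * (C3 + ε * d / 4)) hKd
      nlinarith [h6, mul_nonneg (mul_nonneg hε.le hd.le) hC3,
        mul_nonneg (mul_nonneg hε.le hε.le) (mul_nonneg hd.le hd.le)]
    set δ : ℝ := (ε / 4) * (1 - q) with hδ
    have hδ0 : 0 < δ := by positivity
    clear_value δ
    set F : ℝ := (C3 + δ) / (1 - q) with hF
    clear_value F
    have hFeq : F = C3 / (1 - q) + ε / 4 := by
      rw [hF, hδ, add_div, mul_div_cancel_right₀ _ h1q.ne']
    have hFle : F ≤ K + 3 * ε / 4 := by linarith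
    have hFq : F * (1 - q) = C3 + δ := by rw [hF, div_mul_cancel₀ _ h1q.ne']
    have hFfix : q * F + (C3 + δ) = F := by nlinarith [hFq]
    have hF0 : 0 ≤ F := by
      rw [hF]; apply div_nonneg _ h1q.le; linarith
    -- find T with kap ≤ q and perturbation ≤ δ eventually
    have hM0 := Mdrift_tendsto m
    have hkt : Tendsto (kap m C4) atTop (nhds C4) := by
      have : Tendsto (fun t => C4 * (1 + 2 * Mdrift m t)) atTop (nhds (C4 * (1 + 2 * 0))) :=
        tendsto_const_nhds.mul ((tendsto_const_nhds).add (tendsto_const_nhds.mul hM0))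
      simp only [mul_zero, add_zero, mul_one] at this
      exact this
    have hk_ev : ∀ᶠ t in atTop, kap m C4 t ≤ q :=
      (hkt.eventually_le_const hqC4)
    have hpt : Tendsto (fun t => C4 * ((Mdrift m t) ^ 2 + 2 * Mdrift m t)) atTop (nhds 0) := by
      have : Tendsto (fun t => C4 * ((Mdrift m t) ^ 2 + 2 * Mdrift m t)) atTop
          (nhds (C4 * ((0:ℝ) ^ 2 + 2 * 0))) :=
        tendsto_const_nhds.mul (((hM0.pow 2)).add (tendsto_const_nhds.mul hM0))
      simpa using this
    have hp_ev : ∀ᶠ t in atTop, C4 * ((Mdrift m t) ^ 2 + 2 * Mdrift m t) ≤ δ :=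
      hpt.eventually_le_const hδ0
    obtain ⟨T, hT⟩ := ((hk_ev.and hp_ev).and (eventually_ge_atTop 1)).exists_forall_of_atTop
    -- induction: a (T + n) ≤ F + q ^ n * a T
    have hind : ∀ n, a (T + n) ≤ F + q ^ n * a T := by
      intro n
      induction n with
      | zero => simp; linarith
      | succ n ih =>
        have hTn := hT (T + n) (Nat.le_add_right _ _)
        have h1 : a (T + n + 1) ≤ kap m C4 (T + n) * a (T + n) + C3
            + C4 * ((Mdrift m (T + n)) ^ 2 + 2 * Mdrift m (T + n)) :=
          hrec (T + n) hTn.2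
        have h2 : kap m C4 (T + n) * a (T + n) ≤ q * a (T + n) :=
          mul_le_mul_of_nonneg_right hTn.1.1 (ha _)
        have h3 : q * a (T + n) ≤ q * (F + q ^ n * a T) :=
          mul_le_mul_of_nonneg_left ih hq0
        have : a (T + (n + 1)) ≤ q * (F + q ^ n * a T) + C3 + δ := by
          have : T + (n + 1) = T + n + 1 := by ring
          rw [this]; linarith [hTn.1.2]
        calc a (T + (n + 1)) ≤ q * (F + q ^ n * a T) + C3 + δ := this
          _ = (q * F + (C3 + δ)) + q ^ (n + 1) * a T := by ring
          _ = F + q ^ (n + 1) * a T := by rw [hFfix]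
    -- q ^ n * a T → 0
    have hq0' : Tendsto (fun n : ℕ => q ^ n * a T) atTop (nhds 0) := by
      have := tendsto_pow_atTop_nhds_zero_of_lt_one hq0 hq1
      simpa using this.mul_const (a T)
    have hev : ∀ᶠ n in atTop, q ^ n * a T ≤ ε / 4 :=
      hq0'.eventually_le_const (by positivity)
    obtain ⟨N, hN⟩ := hev.exists_forall_of_atTop
    rw [eventually_atTop]
    refine ⟨T + N, fun t ht => ?_⟩
    have hTt : T ≤ t := le_trans (Nat.le_add_right _ _) ht
    have hNt : N ≤ t - T := by omega
    have := hind (t - T)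
    have ht' : T + (t - T) = t := by omega
    rw [ht'] at this
    have := le_trans this (by linarith [hN _ hNt] : F + q ^ (t - T) * a T ≤ F + ε / 4)
    linarith [hFle]
  -- conclude
  apply le_of_forall_pos_le_add
  intro ε hε
  apply limsup_le_of_le
  · exact isCoboundedUnder_le_of_le (x := 0) atTop ha
  · exact key ε hε
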